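/- The second-degree delay bounds are at least as tight as the first-degree bounds: for every i ∈ N, the second-degree upper bound satisfies t̄_i ≤ 1/(r_{i,N} − λ_i) (the first-degree upper bound, i.e., the conservative M/M/1 approximation), and the second-degree lower bound satisfies t̲_i ≥ 1/(r_{i,{i}} − λ_i) (the first-degree lower bound). -/

import Mathlib

open Finset

/-- The lumped-chain rate matrix `Q̂`: from state `A`, queue `i ∉ A` turns on at rate
`λ_i` (moving to `insert i A`), queue `i ∈ A` empties at rate `r_{i,A} − λ_i`
(moving to `A.erase i`), and the diagonal entry is minus the total outgoing rate. -/
noncomputable def Qhat {n : ℕ} (lam : Fin n → ℝ) (r : Fin n → Finset (Fin n) → ℝ)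
    (A B : Finset (Fin n)) : ℝ :=
  if A = B then -((∑ i ∈ Aᶜ, lam i) + ∑ i ∈ A, (r i A - lam i))
  else (∑ i ∈ Aᶜ, if B = insert i A then lam i else 0)
    + ∑ i ∈ A, if B = A.erase i then r i A - lam i else 0

/-- A stationary distribution of the lumped chain `Q̂`. -/
def IsStationaryQhat {n : ℕ} (lam : Fin n → ℝ) (r : Fin n → Finset (Fin n) → ℝ)
    (p : Finset (Fin n) → ℝ) : Prop :=
  (∀ A, 0 ≤ p A ∧ p A ≤ 1) ∧ (∑ A : Finset (Fin n), p A) = 1 ∧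
    ∀ B : Finset (Fin n), (∑ A : Finset (Fin n), p A * Qhat lam r A B) = 0

/-- The refined delay approximation
`t_i = Σ_{A ∋ i} p(A) r_{i,A} / ((r_{i,A} − λ_i) λ_i)`. -/
noncomputable def tApprox {n : ℕ} (lam : Fin n → ℝ) (r : Fin n → Finset (Fin n) → ℝ)
    (p : Finset (Fin n) → ℝ) (i : Fin n) : ℝ :=
  ∑ A ∈ Finset.univ.filter (fun A : Finset (Fin n) => i ∈ A),
    p A * r i A / ((r i A - lam i) * lam i)

/-- The second-degree upper bound
`t̄_i = Σ_{Ā ⊆ N∖{i}} π̄_i(Ā) / (r_{i,Ā∪{i}} − λ_i)` with `p̄_j = λ_j / r_{j,N}`. -/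
noncomputable def tUpper {n : ℕ} (lam : Fin n → ℝ) (r : Fin n → Finset (Fin n) → ℝ)
    (i : Fin n) : ℝ :=
  ∑ A ∈ (Finset.univ.erase i).powerset,
    ((∏ j ∈ A, lam j / r j Finset.univ) *
      ∏ l ∈ (Finset.univ.erase i) \ A, (1 - lam l / r l Finset.univ)) /
      (r i (insert i A) - lam i)

/-- The second-degree lower bound
`t̲_i = 1 / (Σ_{A̲ ⊆ N∖{i}} π̲_i(A̲) r_{i,A̲∪{i}} − λ_i)` with `p̲_j = λ_j / r_{j,{j}}`. -/
noncomputable def tLower {n : ℕ} (lam : Fin n → ℝ) (r : Fin n → Finset (Fin n) → ℝ)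
    (i : Fin n) : ℝ :=
  1 / ((∑ A ∈ (Finset.univ.erase i).powerset,
    ((∏ j ∈ A, lam j / r j {j}) *
      ∏ l ∈ (Finset.univ.erase i) \ A, (1 - lam l / r l {l})) *
      r i (insert i A)) - lam i)

/-- the second-degree bounds are at least as tight as the first-degree
bounds: `t̄_i ≤ 1/(r_{i,N} − λ_i)` and `t̲_i ≥ 1/(r_{i,{i}} − λ_i)`. -/
lemma bern_sum {α : Type*} [DecidableEq α] (S : Finset α) (p : α → ℝ) :
    ∑ A ∈ S.powerset, (∏ j ∈ A, p j) * ∏ l ∈ S \ A, (1 - p l) = 1 := by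
  rw [← Finset.prod_add]
  simp

theorem second_degree_tighter_than_first_degree {n : ℕ} (hn : 1 ≤ n)
    (lam : Fin n → ℝ) (hlam : ∀ i, 0 < lam i)
    (r : Fin n → Finset (Fin n) → ℝ)
    (hr_pos : ∀ (i : Fin n) (A : Finset (Fin n)), i ∈ A → 0 < r i A)
    (hr_mono : ∀ (i : Fin n) (A B : Finset (Fin n)), i ∈ A → A ⊆ B → r i B ≤ r i A)
    (hstab : ∀ i, lam i < r i Finset.univ) :
    ∀ i : Fin n,
      tUpper lam r i ≤ 1 / (r i Finset.univ - lam i) ∧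
      1 / (r i {i} - lam i) ≤ tLower lam r i := by
  intro i
  set S := Finset.univ.erase i with hS
  have hDpos : 0 < r i Finset.univ - lam i := sub_pos.mpr (hstab i)
  have hrins : ∀ A : Finset (Fin n), r i Finset.univ ≤ r i (insert i A) :=
    fun A => hr_mono i (insert i A) Finset.univ (Finset.mem_insert_self i A)
      (Finset.subset_univ _)
  have hsingle : ∀ j : Fin n, r j Finset.univ ≤ r j {j} :=
    fun j => hr_mono j {j} Finset.univ (Finset.mem_singleton_self j) (Finset.subset_univ _)
  -- upper bound weights nonneg
  have hwU : ∀ A : Finset (Fin n),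
      0 ≤ (∏ j ∈ A, lam j / r j Finset.univ) * ∏ l ∈ S \ A, (1 - lam l / r l Finset.univ) := by
    intro A
    apply mul_nonneg
    · exact Finset.prod_nonneg fun j _ =>
        div_nonneg (hlam j).le (hr_pos j Finset.univ (Finset.mem_univ j)).le
    · exact Finset.prod_nonneg fun l _ => sub_nonneg.mpr
        ((div_le_one (hr_pos l Finset.univ (Finset.mem_univ l))).mpr (hstab l).le)
  have hwL : ∀ A : Finset (Fin n),
      0 ≤ (∏ j ∈ A, lam j / r j {j}) * ∏ l ∈ S \ A, (1 - lam l / r l {l}) := by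
    intro A
    apply mul_nonneg
    · exact Finset.prod_nonneg fun j _ =>
        div_nonneg (hlam j).le (hr_pos j {j} (Finset.mem_singleton_self j)).le
    · exact Finset.prod_nonneg fun l _ => sub_nonneg.mpr
        ((div_le_one (hr_pos l {l} (Finset.mem_singleton_self l))).mpr
          ((hstab l).le.trans (hsingle l)))
  constructor
  · -- upper bound
    unfold tUpper
    calc ∑ A ∈ S.powerset,
          ((∏ j ∈ A, lam j / r j Finset.univ) *
            ∏ l ∈ S \ A, (1 - lam l / r l Finset.univ)) / (r i (insert i A) - lam i)
        ≤ ∑ A ∈ S.powerset,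
          ((∏ j ∈ A, lam j / r j Finset.univ) *
            ∏ l ∈ S \ A, (1 - lam l / r l Finset.univ)) / (r i Finset.univ - lam i) := by
          apply Finset.sum_le_sum
          intro A _
          exact div_le_div_of_nonneg_left (hwU A) hDpos (by linarith [hrins A])
      _ = 1 / (r i Finset.univ - lam i) := by
          rw [← Finset.sum_div, bern_sum]
  · -- lower bound
    unfold tLower
    have hsum : ∑ A ∈ S.powerset, (∏ j ∈ A, lam j / r j {j}) *
        ∏ l ∈ S \ A, (1 - lam l / r l {l}) = 1 := bern_sum S _
    have hle : ∑ A ∈ S.powerset,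
        ((∏ j ∈ A, lam j / r j {j}) * ∏ l ∈ S \ A, (1 - lam l / r l {l})) *
          r i (insert i A) ≤ r i {i} := by
      calc ∑ A ∈ S.powerset,
            ((∏ j ∈ A, lam j / r j {j}) * ∏ l ∈ S \ A, (1 - lam l / r l {l})) *
              r i (insert i A)
          ≤ ∑ A ∈ S.powerset,
            ((∏ j ∈ A, lam j / r j {j}) * ∏ l ∈ S \ A, (1 - lam l / r l {l})) *
              r i {i} := by
            apply Finset.sum_le_sum
            intro A _
            exact mul_le_mul_of_nonneg_left
              (hr_mono i {i} (insert i A) (Finset.mem_singleton_self i)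
                (Finset.singleton_subset_iff.mpr (Finset.mem_insert_self i A))) (hwL A)
        _ = r i {i} := by rw [← Finset.sum_mul, hsum, one_mul]
    have hge : r i Finset.univ ≤ ∑ A ∈ S.powerset,
        ((∏ j ∈ A, lam j / r j {j}) * ∏ l ∈ S \ A, (1 - lam l / r l {l})) *
          r i (insert i A) := by
      calc r i Finset.univ
          = ∑ A ∈ S.powerset,
            ((∏ j ∈ A, lam j / r j {j}) * ∏ l ∈ S \ A, (1 - lam l / r l {l})) *
              r i Finset.univ := by rw [← Finset.sum_mul, hsum, one_mul]
        _ ≤ _ := by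
            apply Finset.sum_le_sum
            intro A _
            exact mul_le_mul_of_nonneg_left (hrins A) (hwL A)
    exact one_div_le_one_div_of_le (by linarith) (by linarith)
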